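/- Let K ⊆ ℂ² be a regular, circled, polynomially convex compact set. Then the topological boundary of K equals {(z,w) ∈ ℂ² : ρ_K(z,w) = 0}. -/

import Mathlib

open MeasureTheory Filter Topology

noncomputable section

/-- Evaluation of a polynomial in two complex variables at a point of `ℂ × ℂ`. -/
def evalPt (p : MvPolynomial (Fin 2) ℂ) (z : ℂ × ℂ) : ℂ :=
  MvPolynomial.eval ![z.1, z.2] p

/-- The set of competitors `(1/deg p) log |p(z)|` in the definition of the extremal
function of `K`. -/
def candSet (K : Set (ℂ × ℂ)) (z : ℂ × ℂ) : Set ℝ :=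
  {v | ∃ p : MvPolynomial (Fin 2) ℂ, 1 ≤ p.totalDegree ∧
      (∀ x ∈ K, ‖evalPt p x‖ ≤ 1) ∧
      v = (p.totalDegree : ℝ)⁻¹ * Real.log (‖evalPt p z‖)}

/-- The (pluricomplex) extremal function `V_K`. -/
def VK (K : Set (ℂ × ℂ)) (z : ℂ × ℂ) : ℝ :=
  max 0 (sSup (candSet K z))

/-- `K` is regular: `V_K` is finite and continuous. -/
def Regular (K : Set (ℂ × ℂ)) : Prop :=
  (∀ z, BddAbove (candSet K z)) ∧ Continuous (VK K)

/-- `K` is circled. -/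
def Circled (K : Set (ℂ × ℂ)) : Prop :=
  ∀ z ∈ K, ∀ t : ℝ,
    (Complex.exp (t * Complex.I) * z.1, Complex.exp (t * Complex.I) * z.2) ∈ K

/-- `K` is polynomially convex. -/
def PolyConvex (K : Set (ℂ × ℂ)) : Prop :=
  K = {z | ∀ p : MvPolynomial (Fin 2) ℂ,
        ‖evalPt p z‖ ≤ sSup ((fun x => ‖evalPt p x‖) '' K)}

/-- The Robin function of `K`, with values in `[-∞, ∞)` (here `EReal`). -/
def robin (K : Set (ℂ × ℂ)) (z : ℂ × ℂ) : EReal :=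
  Filter.limsup
    (fun l : ℂ => ((VK K (l * z.1, l * z.2) - Real.log (‖l‖) : ℝ) : EReal))
    (Filter.comap (fun l : ℂ => ‖l‖) Filter.atTop)

/-- `log |x|`, with value `-∞` at `x = 0`. -/
def elog (x : ℂ) : EReal :=
  if x = 0 then ⊥ else ((Real.log (‖x‖) : ℝ) : EReal)


namespace StatementAux

open MvPolynomial Finset

lemma evalPt_continuous (p : MvPolynomial (Fin 2) ℂ) : Continuous (evalPt p) := by
  have h1 : Continuous fun z : ℂ × ℂ => (![z.1, z.2] : Fin 2 → ℂ) := by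
    refine continuous_pi fun i => ?_
    fin_cases i
    · simpa using continuous_fst
    · simpa using continuous_snd
  exact (MvPolynomial.continuous_eval p).comp h1

lemma vec_smul (c : ℂ) (z : ℂ × ℂ) :
    (![c * z.1, c * z.2] : Fin 2 → ℂ) = fun i => c * ![z.1, z.2] i := by
  funext i; fin_cases i <;> simp

lemma eval_homog_smul {q : MvPolynomial (Fin 2) ℂ} {m : ℕ} (hq : q.IsHomogeneous m)
    (c : ℂ) (x : Fin 2 → ℂ) :
    MvPolynomial.eval (fun i => c * x i) q = c ^ m * MvPolynomial.eval x q := by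
  rw [eval_eq, eval_eq, Finset.mul_sum]
  refine Finset.sum_congr rfl fun d hd => ?_
  have hdeg : d.degree = m := by
    by_contra h
    exact (MvPolynomial.mem_support_iff.mp hd) (hq.coeff_eq_zero h)
  have : (∏ i ∈ d.support, (c * x i) ^ d i)
      = c ^ m * ∏ i ∈ d.support, x i ^ d i := by
    rw [← hdeg, Finsupp.degree_apply]
    rw [← Finset.prod_pow_eq_pow_sum]
    rw [← Finset.prod_mul_distrib]
    exact Finset.prod_congr rfl fun i _ => (mul_pow _ _ _)
  rw [this]; ring

lemma evalPt_homog_smul {q : MvPolynomial (Fin 2) ℂ} {m : ℕ} (hq : q.IsHomogeneous m)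
    (c : ℂ) (z : ℂ × ℂ) :
    evalPt q (c * z.1, c * z.2) = c ^ m * evalPt q z := by
  show MvPolynomial.eval ![c * z.1, c * z.2] q = _
  rw [vec_smul]
  exact eval_homog_smul hq c _


lemma component_bound {K : Set (ℂ × ℂ)} (hcirc : Circled K)
    {p : MvPolynomial (Fin 2) ℂ} {M : ℝ}
    (hM : ∀ y ∈ K, ‖evalPt p y‖ ≤ M)
    (j : ℕ) {x : ℂ × ℂ} (hx : x ∈ K) :
    ‖evalPt (homogeneousComponent j p) x‖ ≤ M := by
  have hM0 : 0 ≤ M := le_trans (norm_nonneg _) (hM x hx)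
  rcases le_or_gt j p.totalDegree with hj | hj
  · set N : ℕ := p.totalDegree + 1 with hN
    have hNpos : 0 < N := Nat.succ_pos _
    have hjN : j < N := Nat.lt_succ_of_le hj
    set ω : ℂ := Complex.exp (2 * Real.pi * Complex.I / (N : ℕ)) with hω
    have hprim : IsPrimitiveRoot ω N := Complex.isPrimitiveRoot_exp N hNpos.ne'
    have hωN : ω ^ N = 1 := hprim.pow_eq_one
    have habsω : ‖ω‖ = 1 := by
      rw [hω, show 2 * (Real.pi : ℂ) * Complex.I / (N:ℕ) =
        (((2 * Real.pi / N : ℝ) : ℂ)) * Complex.I by push_cast; ring]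
      rw [Complex.norm_exp]
      simp [Complex.mul_I_re]
    have hEK : ∀ k : ℕ, (ω ^ k * x.1, ω ^ k * x.2) ∈ K := by
      intro k
      have h1 := hcirc x hx (k * (2 * Real.pi / N))
      have hωk : Complex.exp (((k * (2 * Real.pi / N) : ℝ) : ℂ) * Complex.I) = ω ^ k := by
        rw [hω, ← Complex.exp_nat_mul]
        congr 1
        push_cast
        ring
      rwa [hωk] at h1
    have hexp : ∀ k : ℕ, evalPt p (ω ^ k * x.1, ω ^ k * x.2)
        = ∑ m ∈ range N, (ω ^ k) ^ m * evalPt (homogeneousComponent m p) x := by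
      intro k
      conv_lhs => rw [show p = ∑ m ∈ range N, homogeneousComponent m p from
        (sum_homogeneousComponent p).symm]
      rw [show evalPt (∑ m ∈ range N, homogeneousComponent m p) (ω ^ k * x.1, ω ^ k * x.2)
          = ∑ m ∈ range N, evalPt (homogeneousComponent m p) (ω ^ k * x.1, ω ^ k * x.2) by
        simp [evalPt, map_sum]]
      exact Finset.sum_congr rfl fun m _ =>
        evalPt_homog_smul (homogeneousComponent_isHomogeneous m p) (ω ^ k) x
    have key : (N : ℂ) * evalPt (homogeneousComponent j p) x
        = ∑ k ∈ range N, (ω ^ (N - j)) ^ k * evalPt p (ω ^ k * x.1, ω ^ k * x.2) := by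
      have step : ∑ k ∈ range N, (ω ^ (N - j)) ^ k * evalPt p (ω ^ k * x.1, ω ^ k * x.2)
          = ∑ m ∈ range N, (∑ k ∈ range N, (ω ^ (N - j + m)) ^ k)
              * evalPt (homogeneousComponent m p) x := by
        simp_rw [hexp, Finset.mul_sum]
        rw [Finset.sum_comm]
        refine Finset.sum_congr rfl fun m _ => ?_
        rw [Finset.sum_mul]
        refine Finset.sum_congr rfl fun k _ => ?_
        have hpow : (ω ^ (N - j + m)) ^ k = (ω ^ (N - j)) ^ k * (ω ^ k) ^ m := by
          rw [← pow_mul, ← pow_mul, ← pow_mul, ← pow_add, add_mul, mul_comm k m]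
        rw [hpow]; ring
      rw [step, Finset.sum_eq_single j]
      · have h1 : ∑ k ∈ range N, (ω ^ (N - j + j)) ^ k = (N : ℂ) := by
          rw [Nat.sub_add_cancel hjN.le, hωN]
          simp
        rw [h1]
      · intro m hm hmj
        have hmN : m < N := Finset.mem_range.mp hm
        have hr1 : ω ^ (N - j + m) ≠ 1 := by
          intro h
          rw [hprim.pow_eq_one_iff_dvd] at h
          clear_value N
          have heqN : N - j + m = N := by
            rcases h with ⟨c, hc⟩
            have hc2 : c < 2 := by
              by_contra hge
              push_neg at hge
              have h2 : 2 * N ≤ N * c := by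
                calc 2 * N = N * 2 := by ring
                _ ≤ N * c := Nat.mul_le_mul_left N hge
              omega
            interval_cases c <;> omega
          omega
        have hrN : (ω ^ (N - j + m)) ^ N = 1 := by
          rw [← pow_mul, mul_comm, pow_mul, hωN, one_pow]
        rw [geom_sum_eq hr1, hrN, sub_self, zero_div, zero_mul]
      · intro h; exact absurd (Finset.mem_range.mpr hjN) h
    have habs : (N : ℝ) * ‖evalPt (homogeneousComponent j p) x‖ ≤ (N : ℝ) * M := by
      have h2 : ‖(N : ℂ) * evalPt (homogeneousComponent j p) x‖
          ≤ (N : ℝ) * M := by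
        rw [key]
        refine le_trans (norm_sum_le _ _) ?_
        have h3 : ∀ k ∈ range N,
            ‖(ω ^ (N - j)) ^ k * evalPt p (ω ^ k * x.1, ω ^ k * x.2)‖ ≤ M := by
          intro k _
          rw [norm_mul, norm_pow, norm_pow, habsω, one_pow, one_pow, one_mul]
          exact hM _ (hEK k)
        refine le_trans (Finset.sum_le_sum h3) ?_
        rw [Finset.sum_const, Finset.card_range, nsmul_eq_mul]
      rwa [norm_mul, Complex.norm_natCast] at h2
    have hNR : (0:ℝ) < (N:ℝ) := by exact_mod_cast hNpos
    exact le_of_mul_le_mul_left habs hNR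
  · rw [homogeneousComponent_eq_zero _ _ hj]
    simpa [evalPt] using hM0

lemma powers_trick {a M c : ℝ} (ha : 0 ≤ a) (hM : 0 < M) (hc : 0 ≤ c)
    (h : ∀ n : ℕ, 1 ≤ n → a ^ n ≤ (c * n + 1) * M ^ n) : a ≤ M := by
  by_contra hlt
  push_neg at hlt
  have ha0 : 0 < a := lt_trans hM hlt
  set r : ℝ := M / a with hr
  have hr0 : 0 ≤ r := div_nonneg hM.le ha0.le
  have hr1 : r < 1 := (div_lt_one ha0).mpr hlt
  have hges : ∀ n : ℕ, 1 ≤ n → 1 ≤ (c * n + 1) * r ^ n := by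
    intro n hn
    have h1 := h n hn
    have h2 : 0 < a ^ n := pow_pos ha0 n
    rw [hr, div_pow, mul_div_assoc', le_div_iff₀ h2, one_mul]
    exact h1
  have ht : Tendsto (fun n : ℕ => (c * n + 1) * r ^ n) atTop (nhds 0) := by
    have h1 : Tendsto (fun n : ℕ => (n : ℝ) ^ 1 * r ^ n) atTop (nhds 0) := by
      have hs := summable_pow_mul_geometric_of_norm_lt_one 1
        (r := r) (by rwa [Real.norm_eq_abs, abs_of_nonneg hr0])
      exact hs.tendsto_atTop_zero
    have h2 : Tendsto (fun n : ℕ => r ^ n) atTop (nhds 0) :=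
      tendsto_pow_atTop_nhds_zero_of_lt_one hr0 hr1
    have h3 : Tendsto (fun n : ℕ => c * ((n:ℝ) ^ 1 * r ^ n) + r ^ n) atTop (nhds (c * 0 + 0)) :=
      ((h1.const_mul c).add h2)
    rw [mul_zero, add_zero] at h3
    refine h3.congr fun n => by ring
  have := ht.eventually (gt_mem_nhds (by norm_num : (0:ℝ) < 1))
  rcases (this.and (eventually_ge_atTop 1)).exists with ⟨n, hn1, hn2⟩
  exact absurd (hges n hn2) (not_le.mpr hn1)

lemma evalPt_C_mul (c : ℂ) (q : MvPolynomial (Fin 2) ℂ) (z : ℂ × ℂ) :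
    evalPt (MvPolynomial.C c * q) z = c * evalPt q z := by
  simp [evalPt]

lemma engine {K : Set (ℂ × ℂ)} (hcirc : Circled K) {x₀ : ℂ × ℂ} (hx₀ : x₀ ∈ K)
    {p : MvPolynomial (Fin 2) ℂ} {z : ℂ × ℂ} {M b : ℝ} (hM : 0 < M) (hb : 1 ≤ b)
    (hp : ∀ x ∈ K, ‖evalPt p x‖ ≤ M)
    (hq : ∀ (q : MvPolynomial (Fin 2) ℂ) (d : ℕ), 1 ≤ d → q.IsHomogeneous d →
      (∀ x ∈ K, ‖evalPt q x‖ ≤ 1) → ‖evalPt q z‖ ≤ b ^ d) :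
    ‖evalPt p z‖ ≤ M * b ^ p.totalDegree := by
  set D : ℕ := p.totalDegree with hD
  have hb0 : 0 < b := lt_of_lt_of_le one_pos hb
  have hMb : 0 < M * b ^ D := mul_pos hM (pow_pos hb0 D)
  refine powers_trick (norm_nonneg _) hMb (Nat.cast_nonneg D) ?_
  intro n hn
  have hMn : 0 < M ^ n := pow_pos hM n
  -- bound for p^n on K
  have hpn : ∀ x ∈ K, ‖evalPt (p ^ n) x‖ ≤ M ^ n := by
    intro x hx
    have : evalPt (p ^ n) x = (evalPt p x) ^ n := by simp [evalPt]
    rw [this, norm_pow]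
    exact pow_le_pow_left₀ (norm_nonneg _) (hp x hx) n
  -- bound for each homogeneous component of p^n at z
  have hcom : ∀ j : ℕ, ‖evalPt (homogeneousComponent j (p ^ n)) z‖
      ≤ M ^ n * b ^ j := by
    intro j
    rcases Nat.eq_zero_or_pos j with hj0 | hjpos
    · subst hj0
      rw [homogeneousComponent_zero]
      have h1 : evalPt (MvPolynomial.C (coeff 0 (p ^ n)) : MvPolynomial (Fin 2) ℂ) z
          = coeff 0 (p ^ n) := by simp [evalPt]
      have h2 : evalPt (MvPolynomial.C (coeff 0 (p ^ n)) : MvPolynomial (Fin 2) ℂ) x₀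
          = coeff 0 (p ^ n) := by simp [evalPt]
      have h3 := component_bound hcirc hpn 0 hx₀
      rw [homogeneousComponent_zero, h2] at h3
      rw [h1, pow_zero, mul_one]
      exact h3
    · set q : MvPolynomial (Fin 2) ℂ :=
        MvPolynomial.C (((M ^ n)⁻¹ : ℝ) : ℂ) * homogeneousComponent j (p ^ n) with hqdef
      have hqhom : q.IsHomogeneous j :=
        (homogeneousComponent_isHomogeneous j (p ^ n)).C_mul _
      have hqbd : ∀ x ∈ K, ‖evalPt q x‖ ≤ 1 := by
        intro x hx
        rw [hqdef, evalPt_C_mul, norm_mul, Complex.norm_real, Real.norm_eq_abs,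
          abs_of_nonneg (inv_nonneg.mpr hMn.le)]
        rw [inv_mul_le_iff₀ hMn, mul_one]
        exact component_bound hcirc hpn j hx
      have h4 := hq q j hjpos hqhom hqbd
      have h5 : ‖evalPt q z‖
          = (M ^ n)⁻¹ * ‖evalPt (homogeneousComponent j (p ^ n)) z‖ := by
        rw [hqdef, evalPt_C_mul, norm_mul, Complex.norm_real, Real.norm_eq_abs,
          abs_of_nonneg (inv_nonneg.mpr hMn.le)]
      rw [h5, inv_mul_le_iff₀ hMn] at h4
      exact h4
  -- sum up
  have hDn : (p ^ n).totalDegree ≤ n * D := totalDegree_pow p n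
  have hsum : ‖evalPt (p ^ n) z‖
      ≤ ((p ^ n).totalDegree + 1) * (M ^ n * b ^ (n * D)) := by
    conv_lhs => rw [show (p ^ n) = ∑ j ∈ range ((p ^ n).totalDegree + 1),
      homogeneousComponent j (p ^ n) from (sum_homogeneousComponent _).symm]
    have h6 : evalPt (∑ j ∈ range ((p ^ n).totalDegree + 1), homogeneousComponent j (p ^ n)) z
        = ∑ j ∈ range ((p ^ n).totalDegree + 1), evalPt (homogeneousComponent j (p ^ n)) z := by
      simp [evalPt, map_sum]
    rw [h6]
    refine le_trans (norm_sum_le _ _) ?_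
    have h7 : ∀ j ∈ range ((p ^ n).totalDegree + 1),
        ‖evalPt (homogeneousComponent j (p ^ n)) z‖ ≤ M ^ n * b ^ (n * D) := by
      intro j hj
      refine le_trans (hcom j) ?_
      have : b ^ j ≤ b ^ (n * D) :=
        pow_le_pow_right₀ hb (le_trans (Nat.lt_succ_iff.mp (mem_range.mp hj)) hDn)
      exact mul_le_mul_of_nonneg_left this hMn.le
    refine le_trans (Finset.sum_le_sum h7) ?_
    rw [Finset.sum_const, Finset.card_range, nsmul_eq_mul]
    push_cast
    exact le_refl _
  have habs : ‖evalPt p z‖ ^ n = ‖evalPt (p ^ n) z‖ := by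
    rw [show evalPt (p ^ n) z = (evalPt p z) ^ n by simp [evalPt], norm_pow]
  rw [habs]
  refine le_trans hsum ?_
  have hcast : ((p ^ n).totalDegree + 1 : ℝ) ≤ (D : ℝ) * n + 1 := by
    have : ((p ^ n).totalDegree : ℝ) ≤ (n * D : ℕ) := by exact_mod_cast hDn
    push_cast at this ⊢
    linarith [this]
  have hrhs : (M * b ^ D) ^ n = M ^ n * b ^ (n * D) := by
    rw [mul_pow, ← pow_mul, mul_comm D n]
  rw [hrhs]
  refine mul_le_mul_of_nonneg_right ?_ (mul_pos hMn (pow_pos hb0 _)).le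
  exact hcast

/-- candidates for the homogeneous Siciak function -/
def Scand (K : Set (ℂ × ℂ)) (z : ℂ × ℂ) : Set ℝ :=
  {r | ∃ (q : MvPolynomial (Fin 2) ℂ) (d : ℕ), 1 ≤ d ∧ q.IsHomogeneous d ∧
      (∀ x ∈ K, ‖evalPt q x‖ ≤ 1) ∧
      r = ‖evalPt q z‖ ^ ((d : ℝ)⁻¹)}

def sK (K : Set (ℂ × ℂ)) (z : ℂ × ℂ) : ℝ := sSup (Scand K z)

lemma zero_mem_Scand (K : Set (ℂ × ℂ)) (z : ℂ × ℂ) : (0 : ℝ) ∈ Scand K z := by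
  refine ⟨0, 1, le_refl 1, isHomogeneous_zero _ _ 1, fun x _ => by simp [evalPt], ?_⟩
  simp [evalPt]

lemma K_nonempty {K : Set (ℂ × ℂ)} (hreg : Regular K) : K.Nonempty := by
  by_contra h
  rw [Set.not_nonempty_iff_eq_empty] at h
  subst h
  obtain ⟨B, hB⟩ := hreg.1 (1, 0)
  set c : ℝ := Real.exp (B + 1) with hc
  have hc0 : (0:ℝ) < c := Real.exp_pos _
  set p : MvPolynomial (Fin 2) ℂ := MvPolynomial.C (c : ℂ) * MvPolynomial.X 0 with hp
  have hpne : p ≠ 0 := by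
    intro h0
    have : evalPt p (1, 0) = c := by simp [hp, evalPt]
    rw [h0] at this
    simp [evalPt] at this
    exact absurd this.symm (by exact_mod_cast hc0.ne')
  have htd : p.totalDegree = 1 := (isHomogeneous_C_mul_X (c:ℂ) 0).totalDegree hpne
  have hmem : (B + 1 : ℝ) ∈ candSet ∅ (1, 0) := by
    refine ⟨p, by rw [htd], fun x hx => absurd hx (Set.notMem_empty x), ?_⟩
    rw [htd]
    have : evalPt p (1, 0) = c := by simp [hp, evalPt]
    rw [this]
    rw [Complex.norm_real, Real.norm_eq_abs, abs_of_nonneg hc0.le, hc, Real.log_exp]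
    norm_num
  have := hB hmem
  linarith

lemma SupK_bddAbove {K : Set (ℂ × ℂ)} (hK : IsCompact K) (p : MvPolynomial (Fin 2) ℂ) :
    BddAbove ((fun x => ‖evalPt p x‖) '' K) :=
  (hK.image (continuous_norm.comp (evalPt_continuous p))).bddAbove

lemma le_SupK {K : Set (ℂ × ℂ)} (hK : IsCompact K) (p : MvPolynomial (Fin 2) ℂ)
    {x : ℂ × ℂ} (hx : x ∈ K) :
    ‖evalPt p x‖ ≤ sSup ((fun x => ‖evalPt p x‖) '' K) :=
  le_csSup (SupK_bddAbove hK p) ⟨x, hx, rfl⟩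

lemma Scand_le_exp_VK {K : Set (ℂ × ℂ)} (hreg : Regular K) (z : ℂ × ℂ)
    {r : ℝ} (hr : r ∈ Scand K z) : r ≤ Real.exp (VK K z) := by
  have hVK0 : 0 ≤ VK K z := le_max_left _ _
  obtain ⟨q, d, hd, hhom, hbd, rfl⟩ := hr
  set A : ℝ := ‖evalPt q z‖ with hA
  have hA0 : 0 ≤ A := norm_nonneg _
  rcases le_or_gt A 1 with hA1 | hA1
  · refine le_trans (Real.rpow_le_one hA0 hA1 (by positivity)) ?_
    exact Real.one_le_exp hVK0
  · have hq0 : q ≠ 0 := by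
      intro h0
      rw [h0] at hA
      simp [evalPt] at hA
      rw [hA] at hA1
      norm_num at hA1
    have htd : q.totalDegree = d := hhom.totalDegree hq0
    have hmem : ((d : ℝ)⁻¹ * Real.log A) ∈ candSet K z := by
      refine ⟨q, by rw [htd]; exact hd, hbd, by rw [htd]⟩
    have h1 : (d : ℝ)⁻¹ * Real.log A ≤ VK K z :=
      le_trans (le_csSup (hreg.1 z) hmem) (le_max_right _ _)
    have h2 : A ^ ((d:ℝ)⁻¹) = Real.exp ((d : ℝ)⁻¹ * Real.log A) := by
      rw [Real.rpow_def_of_pos (lt_trans one_pos hA1), mul_comm]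
    rw [h2]
    exact Real.exp_le_exp.mpr h1

lemma Scand_bddAbove {K : Set (ℂ × ℂ)} (hreg : Regular K) (z : ℂ × ℂ) :
    BddAbove (Scand K z) :=
  ⟨Real.exp (VK K z), fun _ hr => Scand_le_exp_VK hreg z hr⟩

lemma sK_nonneg {K : Set (ℂ × ℂ)} (hreg : Regular K) (z : ℂ × ℂ) : 0 ≤ sK K z :=
  le_csSup (Scand_bddAbove hreg z) (zero_mem_Scand K z)

lemma sK_le_exp_VK {K : Set (ℂ × ℂ)} (hreg : Regular K) (z : ℂ × ℂ) :
    sK K z ≤ Real.exp (VK K z) :=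
  Real.sSup_le (fun _ hr => Scand_le_exp_VK hreg z hr) (Real.exp_pos _).le

lemma homog_le_of_sK {K : Set (ℂ × ℂ)} (hreg : Regular K) {z : ℂ × ℂ} {b : ℝ}
    (hs : sK K z ≤ b) (hb : 1 ≤ b) :
    ∀ (q : MvPolynomial (Fin 2) ℂ) (d : ℕ), 1 ≤ d → q.IsHomogeneous d →
      (∀ x ∈ K, ‖evalPt q x‖ ≤ 1) → ‖evalPt q z‖ ≤ b ^ d := by
  intro q d hd hhom hbd
  have hd0 : d ≠ 0 := by omega
  have hmem : ‖evalPt q z‖ ^ ((d:ℝ)⁻¹) ∈ Scand K z := ⟨q, d, hd, hhom, hbd, rfl⟩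
  have hr : ‖evalPt q z‖ ^ ((d:ℝ)⁻¹) ≤ b :=
    le_trans (le_csSup (Scand_bddAbove hreg z) hmem) hs
  have h1 : (‖evalPt q z‖ ^ ((d:ℝ)⁻¹)) ^ d = ‖evalPt q z‖ :=
    Real.rpow_inv_natCast_pow (norm_nonneg _) hd0
  calc ‖evalPt q z‖ = (‖evalPt q z‖ ^ ((d:ℝ)⁻¹)) ^ d := h1.symm
    _ ≤ b ^ d := pow_le_pow_left₀ (Real.rpow_nonneg (norm_nonneg _) _) hr d

lemma mem_K_iff_sK_le_one {K : Set (ℂ × ℂ)} (hK : IsCompact K) (hreg : Regular K)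
    (hcirc : Circled K) (hpc : PolyConvex K) (z : ℂ × ℂ) :
    z ∈ K ↔ sK K z ≤ 1 := by
  obtain ⟨x₀, hx₀⟩ := K_nonempty hreg
  constructor
  · intro hz
    refine Real.sSup_le ?_ zero_le_one
    rintro r ⟨q, d, hd, hhom, hbd, rfl⟩
    exact Real.rpow_le_one (norm_nonneg _) (hbd z hz) (by positivity)
  · intro hs
    rw [hpc]
    intro p
    refine le_of_forall_pos_le_add ?_
    intro ε hε
    set M : ℝ := sSup ((fun x => ‖evalPt p x‖) '' K) with hM
    have hM0 : 0 ≤ M := le_trans (norm_nonneg _) (le_SupK hK p hx₀)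
    have hMε : 0 < M + ε := by linarith
    have h1 := engine hcirc hx₀ (p := p) (z := z) hMε le_rfl
      (fun x hx => le_trans (le_SupK hK p hx) (by linarith))
      (homog_le_of_sK hreg hs le_rfl)
    rwa [one_pow, mul_one] at h1

lemma VK_eq_log_max {K : Set (ℂ × ℂ)} (hK : IsCompact K) (hreg : Regular K)
    (hcirc : Circled K) (z : ℂ × ℂ) :
    VK K z = Real.log (max 1 (sK K z)) := by
  obtain ⟨x₀, hx₀⟩ := K_nonempty hreg
  set b : ℝ := max 1 (sK K z) with hb
  have hb1 : 1 ≤ b := le_max_left _ _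
  have hb0 : 0 < b := lt_of_lt_of_le one_pos hb1
  have hL0 : 0 ≤ Real.log b := Real.log_nonneg hb1
  refine le_antisymm ?_ ?_
  · refine max_le hL0 ?_
    refine Real.sSup_le ?_ hL0
    rintro v ⟨p, hd, hbd, rfl⟩
    have h1 := engine hcirc hx₀ (p := p) (z := z) one_pos hb1 hbd
      (homog_le_of_sK hreg (le_max_right _ _) hb1)
    rw [one_mul] at h1
    rcases eq_or_lt_of_le (norm_nonneg (evalPt p z)) with hA0 | hA0
    · rw [← hA0, Real.log_zero, mul_zero]
      exact hL0
    set A : ℝ := ‖evalPt p z‖ with hA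
    have h2 : Real.log A ≤ (p.totalDegree : ℝ) * Real.log b := by
      calc Real.log A ≤ Real.log (b ^ p.totalDegree) := Real.log_le_log hA0 h1
        _ = (p.totalDegree : ℝ) * Real.log b := by rw [Real.log_pow]
    have hdpos : (0:ℝ) < (p.totalDegree : ℝ) := by exact_mod_cast hd
    calc (p.totalDegree : ℝ)⁻¹ * Real.log A
        ≤ (p.totalDegree : ℝ)⁻¹ * ((p.totalDegree : ℝ) * Real.log b) := by
          exact mul_le_mul_of_nonneg_left h2 (by positivity)
      _ = Real.log b := by field_simp
  · have h3 : b ≤ Real.exp (VK K z) := by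
      refine max_le (Real.one_le_exp (le_max_left _ _)) (sK_le_exp_VK hreg z)
    calc Real.log b ≤ Real.log (Real.exp (VK K z)) :=
          Real.log_le_log hb0 h3
      _ = VK K z := Real.log_exp _

lemma exp_VK_eq {K : Set (ℂ × ℂ)} (hK : IsCompact K) (hreg : Regular K)
    (hcirc : Circled K) (z : ℂ × ℂ) :
    Real.exp (VK K z) = max 1 (sK K z) := by
  rw [VK_eq_log_max hK hreg hcirc z, Real.exp_log (lt_of_lt_of_le one_pos (le_max_left _ _))]

lemma sSup_mul_pos {c : ℝ} (hc : 0 < c) (S : Set ℝ) :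
    sSup ((fun r => c * r) '' S) = c * sSup S := by
  rcases S.eq_empty_or_nonempty with rfl | hne
  · simp [Real.sSup_empty]
  by_cases hbdd : BddAbove S
  · have hlub : IsLUB S (sSup S) := isLUB_csSup hne hbdd
    have himg : IsLUB ((fun r => c * r) '' S) (c * sSup S) := by
      constructor
      · rintro _ ⟨r, hr, rfl⟩
        exact mul_le_mul_of_nonneg_left (hlub.1 hr) hc.le
      · intro u hu
        have h1 : ∀ r ∈ S, r ≤ u / c := by
          intro r hr
          have := hu ⟨r, hr, rfl⟩
          rwa [← le_div_iff₀' hc] at this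
        have h2 : sSup S ≤ u / c := csSup_le hne h1
        rwa [← le_div_iff₀' hc]
    exact himg.csSup_eq (hne.image _)
  · have hbdd' : ¬ BddAbove ((fun r => c * r) '' S) := by
      intro ⟨u, hu⟩
      refine hbdd ⟨u / c, fun r hr => ?_⟩
      have := hu ⟨r, hr, rfl⟩
      rwa [← le_div_iff₀' hc] at this
    rw [Real.sSup_of_not_bddAbove hbdd, Real.sSup_of_not_bddAbove hbdd', mul_zero]

lemma sK_smul {K : Set (ℂ × ℂ)} {l : ℂ} (hl : l ≠ 0) (z : ℂ × ℂ) :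
    sK K (l * z.1, l * z.2) = ‖l‖ * sK K z := by
  have habs : 0 < ‖l‖ := norm_pos_iff.mpr hl
  have himg : Scand K (l * z.1, l * z.2) = (fun r => ‖l‖ * r) '' Scand K z := by
    ext r
    constructor
    · rintro ⟨q, d, hd, hhom, hbd, rfl⟩
      refine ⟨‖evalPt q z‖ ^ ((d:ℝ)⁻¹), ⟨q, d, hd, hhom, hbd, rfl⟩, ?_⟩
      rw [evalPt_homog_smul hhom l z, norm_mul, norm_pow]
      rw [Real.mul_rpow (by positivity) (norm_nonneg _),
        Real.pow_rpow_inv_natCast (norm_nonneg _) (by omega : d ≠ 0)]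
    · rintro ⟨_, ⟨q, d, hd, hhom, hbd, rfl⟩, rfl⟩
      refine ⟨q, d, hd, hhom, hbd, ?_⟩
      rw [evalPt_homog_smul hhom l z, norm_mul, norm_pow]
      rw [Real.mul_rpow (by positivity) (norm_nonneg _),
        Real.pow_rpow_inv_natCast (norm_nonneg _) (by omega : d ≠ 0)]
  rw [sK, himg, sSup_mul_pos habs]
  rfl

lemma ereal_eq_bot_of_le_neg_nat {x : EReal}
    (h : ∀ n : ℕ, x ≤ ((-(n:ℝ) : ℝ) : EReal)) : x = ⊥ := by
  induction x using EReal.rec with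
  | bot => rfl
  | coe r =>
    exfalso
    obtain ⟨n, hn⟩ := exists_nat_gt (-r)
    have := EReal.coe_le_coe_iff.mp (h n)
    linarith
  | top =>
    exfalso
    have := h 0
    rw [show ((-(0:ℕ):ℝ) : EReal) = ((0:ℝ) : EReal) by norm_num] at this
    exact absurd this (by simp)

lemma interior_eq_sK_lt_one (hK : IsCompact K) (hreg : Regular K)
    (hcirc : Circled K) (hpc : PolyConvex K) :
    interior K = {z : ℂ × ℂ | sK K z < 1} := by
  apply Set.Subset.antisymm
  · intro z hz
    have hcont : Continuous fun t : ℝ => ((((1 + t : ℝ) : ℂ) * z.1, ((1 + t : ℝ) : ℂ) * z.2) : ℂ × ℂ) := by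
      apply Continuous.prodMk <;> exact (Complex.continuous_ofReal.comp (by continuity)).mul continuous_const
    have h0 : ((((1 + (0:ℝ) : ℝ) : ℂ) * z.1, ((1 + (0:ℝ) : ℝ) : ℂ) * z.2) : ℂ × ℂ) = z := by
      simp
    have hnb : interior K ∈ 𝓝 (((((1 + (0:ℝ) : ℝ) : ℂ) * z.1, ((1 + (0:ℝ) : ℝ) : ℂ) * z.2) : ℂ × ℂ)) := by
      rw [h0]; exact isOpen_interior.mem_nhds hz
    have hpre := hcont.continuousAt.preimage_mem_nhds hnb
    rw [Metric.mem_nhds_iff] at hpre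
    obtain ⟨ε, hε, hball⟩ := hpre
    have htball : (ε/2 : ℝ) ∈ Metric.ball (0:ℝ) ε := by
      rw [Metric.mem_ball, Real.dist_eq, sub_zero, abs_of_pos (by linarith : (0:ℝ) < ε/2)]
      linarith
    have hmem := hball htball
    have hKmem : ((((1 + ε/2 : ℝ) : ℂ) * z.1, ((1 + ε/2 : ℝ) : ℂ) * z.2) : ℂ × ℂ) ∈ K :=
      interior_subset hmem
    have hl0 : (((1 + ε/2 : ℝ) : ℂ)) ≠ 0 := by
      simp only [ne_eq, Complex.ofReal_eq_zero]
      linarith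
    have hs := (mem_K_iff_sK_le_one hK hreg hcirc hpc _).mp hKmem
    rw [sK_smul hl0 z] at hs
    have habs : ‖((1 + ε/2 : ℝ) : ℂ)‖ = 1 + ε/2 := by
      rw [Complex.norm_real, Real.norm_eq_abs, abs_of_pos (by linarith)]
    rw [habs] at hs
    have hs0 := sK_nonneg hreg z
    show sK K z < 1
    nlinarith
  · intro z hz
    have hz' : sK K z < 1 := hz
    set G : ℂ × ℂ → ℝ := fun w => Real.exp (VK K ((2:ℂ) * w.1, (2:ℂ) * w.2)) / 2 with hG
    have hGcont : Continuous G := by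
      apply Continuous.div_const
      apply Real.continuous_exp.comp
      exact hreg.2.comp ((continuous_const.mul continuous_fst).prodMk
        (continuous_const.mul continuous_snd))
    have hGval : ∀ w, G w = max 1 (2 * sK K w) / 2 := by
      intro w
      rw [hG]
      simp only
      rw [exp_VK_eq hK hreg hcirc, sK_smul (two_ne_zero) w, Complex.norm_two]
    have hsG : ∀ w, sK K w ≤ G w := by
      intro w
      rw [hGval w]
      have := le_max_right (1:ℝ) (2 * sK K w)
      linarith
    have hGz : G z < 1 := by
      rw [hGval z]
      have : max 1 (2 * sK K z) < 2 := max_lt one_lt_two (by linarith)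
      linarith
    have hUopen : IsOpen {w : ℂ × ℂ | G w < 1} := isOpen_lt hGcont continuous_const
    have hUK : {w : ℂ × ℂ | G w < 1} ⊆ K := by
      intro w hw
      exact (mem_K_iff_sK_le_one hK hreg hcirc hpc w).mpr
        (le_of_lt (lt_of_le_of_lt (hsG w) hw))
    exact mem_interior.mpr ⟨_, hUK, hUopen, hGz⟩

lemma frontier_eq_sK_eq_one (hK : IsCompact K) (hreg : Regular K)
    (hcirc : Circled K) (hpc : PolyConvex K) :
    frontier K = {z : ℂ × ℂ | sK K z = 1} := by
  rw [frontier, hK.isClosed.closure_eq, interior_eq_sK_lt_one hK hreg hcirc hpc]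
  ext z
  simp only [Set.mem_diff, Set.mem_setOf_eq, not_lt]
  rw [mem_K_iff_sK_le_one hK hreg hcirc hpc z]
  constructor
  · rintro ⟨h1, h2⟩; linarith
  · intro h; constructor <;> linarith

lemma comapAbs_neBot : (Filter.comap (fun l : ℂ => ‖l‖) Filter.atTop).NeBot := by
  refine Filter.comap_neBot fun t ht => ?_
  obtain ⟨R, hR⟩ := mem_atTop_sets.mp ht
  exact ⟨((max R 0 : ℝ) : ℂ), hR _ (by rw [Complex.norm_real, Real.norm_eq_abs, abs_of_nonneg (le_max_right R 0)]; exact le_max_left R 0)⟩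

lemma eventually_abs_ge (R : ℝ) :
    ∀ᶠ l : ℂ in Filter.comap (fun l : ℂ => ‖l‖) Filter.atTop,
      R ≤ ‖l‖ :=
  Filter.preimage_mem_comap (Ici_mem_atTop R)

lemma robin_eq_zero_iff (hK : IsCompact K) (hreg : Regular K)
    (hcirc : Circled K) (hpc : PolyConvex K) (z : ℂ × ℂ) :
    robin K z = 0 ↔ sK K z = 1 := by
  have hF := comapAbs_neBot
  set F := Filter.comap (fun l : ℂ => ‖l‖) Filter.atTop with hFdef
  rcases (sK_nonneg hreg z).eq_or_lt with hs0 | hs1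
  · -- sK z = 0 : robin = ⊥
    have hbot : robin K z = ⊥ := by
      have hlen : ∀ n : ℕ, robin K z ≤ ((-(n:ℝ) : ℝ) : EReal) := by
        intro n
        have hev : ∀ᶠ l : ℂ in F,
            ((VK K (l * z.1, l * z.2) - Real.log (‖l‖) : ℝ) : EReal)
              ≤ ((-(n:ℝ) : ℝ) : EReal) := by
          filter_upwards [eventually_abs_ge (max 1 (Real.exp n))] with l hl
          have h1 : (1:ℝ) ≤ ‖l‖ := le_trans (le_max_left _ _) hl
          have hl0 : l ≠ 0 := by
            intro h; rw [h] at h1; simp at h1; linarith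
          have hVK : VK K (l * z.1, l * z.2) = 0 := by
            have h7 := exp_VK_eq hK hreg hcirc (l * z.1, l * z.2)
            rw [sK_smul hl0 z, ← hs0, mul_zero, max_eq_left zero_le_one] at h7
            have h8 := congrArg Real.log h7
            rwa [Real.log_exp, Real.log_one] at h8
          rw [hVK]
          rw [EReal.coe_le_coe_iff]
          have h2 : Real.exp n ≤ ‖l‖ := le_trans (le_max_right _ _) hl
          have h3 : (n : ℝ) ≤ Real.log (‖l‖) := by
            calc (n:ℝ) = Real.log (Real.exp n) := (Real.log_exp _).symm
              _ ≤ Real.log (‖l‖) := Real.log_le_log (Real.exp_pos _) h2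
          linarith
        calc robin K z ≤ Filter.limsup (fun _ : ℂ => ((-(n:ℝ) : ℝ) : EReal)) F :=
              Filter.limsup_le_limsup hev
          _ = ((-(n:ℝ) : ℝ) : EReal) := Filter.limsup_const _
      exact ereal_eq_bot_of_le_neg_nat hlen
    rw [hbot]
    constructor
    · intro h; exact absurd h (by simp)
    · intro h; rw [← hs0] at h; norm_num at h
  · -- sK z > 0
    have hev : ∀ᶠ l : ℂ in F,
        ((VK K (l * z.1, l * z.2) - Real.log (‖l‖) : ℝ) : EReal)
          = ((Real.log (sK K z) : ℝ) : EReal) := by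
      filter_upwards [eventually_abs_ge (max 1 (sK K z)⁻¹)] with l hl
      have h1 : (1:ℝ) ≤ ‖l‖ := le_trans (le_max_left _ _) hl
      have hl0 : l ≠ 0 := by
        intro h; rw [h] at h1; simp at h1; linarith
      have habs0 : (0:ℝ) < ‖l‖ := lt_of_lt_of_le one_pos h1
      have h2 : (sK K z)⁻¹ ≤ ‖l‖ := le_trans (le_max_right _ _) hl
      have h3 : (1:ℝ) ≤ ‖l‖ * sK K z := by
        calc (1:ℝ) = (sK K z)⁻¹ * sK K z := (inv_mul_cancel₀ hs1.ne').symm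
          _ ≤ ‖l‖ * sK K z := mul_le_mul_of_nonneg_right h2 hs1.le
      have hVK : VK K (l * z.1, l * z.2) = Real.log (‖l‖ * sK K z) := by
        have h4 := exp_VK_eq hK hreg hcirc (l * z.1, l * z.2)
        rw [sK_smul hl0 z, max_eq_right h3] at h4
        have := congrArg Real.log h4
        rwa [Real.log_exp] at this
      rw [hVK, Real.log_mul habs0.ne' hs1.ne']
      norm_num
    have hrobin : robin K z = ((Real.log (sK K z) : ℝ) : EReal) := by
      rw [robin, ← hFdef, Filter.limsup_congr hev, Filter.limsup_const]
    rw [hrobin]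
    constructor
    · intro h
      have h5 : Real.log (sK K z) = 0 := by exact_mod_cast h
      rcases Real.log_eq_zero.mp h5 with h6 | h6 | h6
      · exact absurd h6 hs1.ne'
      · exact h6
      · linarith
    · intro h
      rw [h, Real.log_one]
      norm_num


end StatementAux

theorem statement13 (K : Set (ℂ × ℂ)) (hK : IsCompact K)
    (hreg : Regular K) (hcirc : Circled K) (hpc : PolyConvex K) :
    frontier K = {z : ℂ × ℂ | robin K z = (0 : EReal)} := by
  rw [StatementAux.frontier_eq_sK_eq_one hK hreg hcirc hpc]
  ext z
  simp only [Set.mem_setOf_eq]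
  exact (StatementAux.robin_eq_zero_iff hK hreg hcirc hpc z).symm
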